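/- Let {(a_i, α_i, b_i, β_i)}_{i∈I} and {(c_j, γ_j, d_j, δ_j)}_{j∈J} be two finite families of quadruples (with α_i ∈ U_{a_i}, β_i ∈ V_{b_i}, γ_j ∈ U_{c_j}, δ_j ∈ V_{d_j}) such that within each family the corresponding atoms are pairwise disjoint and pairwise distinct, and such that ⋃_{i∈I} [a_iα_i, b_iβ_i] = ⋃_{j∈J} [c_jγ_j, d_jδ_j]. Then for every PR-state P one has Σ_{i∈I} P(α_iβ_i | a_ib_i) = Σ_{j∈J} P(γ_jδ_j | c_jd_j). -/

import Mathlib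

namespace Box

variable {N M : ℕ}

/-- The atom `[aα, bβ] = {(x, y) ∈ Γ : x_a = α ∧ y_b = β}`. -/
def atom {U : Fin N → Type} {V : Fin M → Type} (a : Fin N) (α : U a)
    (b : Fin M) (β : V b) : Set ((∀ i, U i) × (∀ j, V j)) :=
  {p | p.1 a = α ∧ p.2 b = β}

/-- `ℒ`: the smallest family of subsets of `Γ` containing the empty set and
every atom, closed under complementation and under unions of finite families
of pairwise disjoint members. -/
inductive Logic (U : Fin N → Type) (V : Fin M → Type) :
    Set ((∀ i, U i) × (∀ j, V j)) → Prop
  | empty : Logic U V ∅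
  | atom (a : Fin N) (α : U a) (b : Fin M) (β : V b) :
      Logic U V (Box.atom a α b β)
  | compl (s : Set ((∀ i, U i) × (∀ j, V j))) (hs : Logic U V s) :
      Logic U V sᶜ
  | iUnion (n : ℕ) (f : Fin n → Set ((∀ i, U i) × (∀ j, V j)))
      (hf : ∀ i, Logic U V (f i))
      (hd : ∀ i j, i ≠ j → Disjoint (f i) (f j)) :
      Logic U V (⋃ i, f i)

/-- The localized element `[a∈P, 𝟙] = {(x, y) ∈ Γ : x_a ∈ P}`. -/
def locL (U : Fin N → Type) (V : Fin M → Type) (a : Fin N) (P : Set (U a)) :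
    Set ((∀ i, U i) × (∀ j, V j)) := {p | p.1 a ∈ P}

/-- The localized element `[𝟙, b∈Q] = {(x, y) ∈ Γ : y_b ∈ Q}`. -/
def locR (U : Fin N → Type) (V : Fin M → Type) (b : Fin M) (Q : Set (V b)) :
    Set ((∀ i, U i) × (∀ j, V j)) := {p | p.2 b ∈ Q}

/-- A state on `ℒ`: a map `ρ : ℒ → [0,1]` with `ρ(Γ) = 1` which is additive on
finite families of pairwise disjoint members of `ℒ` whose union lies in `ℒ`. -/
structure State (U : Fin N → Type) (V : Fin M → Type) where
  val : Set ((∀ i, U i) × (∀ j, V j)) → ℝ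
  nonneg : ∀ s, Logic U V s → 0 ≤ val s
  le_one : ∀ s, Logic U V s → val s ≤ 1
  normalized : val Set.univ = 1
  additive : ∀ (n : ℕ) (f : Fin n → Set ((∀ i, U i) × (∀ j, V j))),
    (∀ i, Logic U V (f i)) → (∀ i j, i ≠ j → Disjoint (f i) (f j)) →
    Logic U V (⋃ i, f i) → val (⋃ i, f i) = ∑ i, val (f i)

/-- A PR-state: nonnegative, normalized for every pair of inputs, and
satisfying the two non-signalling conditions. `val a b α β = P(αβ | ab)`. -/
structure PRState (U : Fin N → Type) (V : Fin M → Type)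
    [∀ a, Fintype (U a)] [∀ b, Fintype (V b)] where
  val : ∀ (a : Fin N) (b : Fin M), U a → V b → ℝ
  nonneg : ∀ a b α β, 0 ≤ val a b α β
  normalized : ∀ a b, ∑ α, ∑ β, val a b α β = 1
  nonsig_left : ∀ (a c : Fin N) (b : Fin M) (β : V b),
    ∑ α, val a b α β = ∑ α, val c b α β
  nonsig_right : ∀ (a : Fin N) (b c : Fin M) (α : U a),
    ∑ β, val a b α β = ∑ β, val a c α β

/-- `p, q ∈ ℒ` are compatible when there are pairwise disjoint
`p₁, q₁, r ∈ ℒ` with `p = p₁ ∪ r` and `q = q₁ ∪ r`. -/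
def Compatible (U : Fin N → Type) (V : Fin M → Type)
    (p q : Set ((∀ i, U i) × (∀ j, V j))) : Prop :=
  ∃ p₁ q₁ r, Logic U V p₁ ∧ Logic U V q₁ ∧ Logic U V r ∧
    Disjoint p₁ q₁ ∧ Disjoint p₁ r ∧ Disjoint q₁ r ∧
    p = p₁ ∪ r ∧ q = q₁ ∪ r

end Box


namespace PRProof

open Finset
open scoped Classical

lemma fiber {B KB : Type*} [Fintype B] [Fintype KB] (ψ : B → ℝ) (pb : B → KB) (c : KB → ℝ) :
    ∑ y, ψ y * c (pb y) = ∑ v, (∑ y, if pb y = v then ψ y else 0) * c v := by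
  have h : ∀ v, (∑ y, if pb y = v then ψ y else 0) * c v
      = ∑ y, if pb y = v then ψ y * c v else 0 := by
    intro v
    rw [Finset.sum_mul]
    exact Finset.sum_congr rfl fun y _ => by by_cases h : pb y = v <;> simp [h]
  simp only [h]
  rw [Finset.sum_comm]
  exact Finset.sum_congr rfl fun y _ => by simp [Finset.sum_ite_eq]

lemma double_fiber {X Y KX KY : Type*} [Fintype X] [Fintype Y] [Fintype KX] [Fintype KY]
    (φ : X → ℝ) (ψ : Y → ℝ) (px : X → KX) (py : Y → KY) (c : KX → KY → ℝ) :
    ∑ x, ∑ y, φ x * ψ y * c (px x) (py y)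
      = ∑ u, ∑ v, (∑ x, if px x = u then φ x else 0) * (∑ y, if py y = v then ψ y else 0) * c u v := by
  have h1 : ∀ x, (∑ y, φ x * ψ y * c (px x) (py y))
      = φ x * ∑ v, (∑ y, if py y = v then ψ y else 0) * c (px x) v := by
    intro x
    rw [← fiber ψ py (c (px x)), Finset.mul_sum]
    exact Finset.sum_congr rfl fun y _ => by ring
  simp only [h1]
  rw [fiber φ px (fun u => ∑ v, (∑ y, if py y = v then ψ y else 0) * c u v)]
  refine Finset.sum_congr rfl fun u _ => ?_
  rw [Finset.mul_sum]
  exact Finset.sum_congr rfl fun v _ => by ring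

section Pi
variable {ι : Type*} [Fintype ι] [DecidableEq ι] {K : ι → Type*} [∀ i, Fintype (K i)]

lemma sum_prod_mul (p c : ∀ i, K i → ℝ) :
    ∑ x : ∀ i, K i, ((∏ i, p i (x i)) * ∏ i, c i (x i)) = ∏ i, ∑ ξ, p i ξ * c i ξ := by
  rw [Fintype.prod_sum (fun i ξ => p i ξ * c i ξ)]
  exact Finset.sum_congr rfl fun x _ => Finset.prod_mul_distrib.symm

lemma sum_ind₁ (p : ∀ i, K i → ℝ) (hp : ∀ i, ∑ ξ, p i ξ = 1) (a : ι) (α : K a) :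
    ∑ x : ∀ i, K i, (if x a = α then ∏ i, p i (x i) else 0) = p a α := by
  set c : ∀ i, K i → ℝ :=
    Function.update (fun i (_ : K i) => (1 : ℝ)) a (fun ξ => if ξ = α then 1 else 0) with hc
  have hprod : ∀ x : ∀ i, K i, (∏ i, c i (x i)) = if x a = α then 1 else 0 := by
    intro x
    rw [Finset.prod_eq_single a]
    · simp [hc]
    · intro i _ hi; simp [hc, Function.update_of_ne hi]
    · simp
  have h2 : (∏ i, ∑ ξ, p i ξ * c i ξ) = p a α := by
    rw [Finset.prod_eq_single a]
    · simp [hc, mul_ite, mul_one, mul_zero, Finset.sum_ite_eq']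
    · intro i _ hi; simp [hc, Function.update_of_ne hi, hp i]
    · simp
  rw [← h2, ← sum_prod_mul p c]
  refine Finset.sum_congr rfl fun x _ => ?_
  rw [hprod x]
  by_cases hx : x a = α <;> simp [hx]

lemma sum_ind₂ (p : ∀ i, K i → ℝ) (hp : ∀ i, ∑ ξ, p i ξ = 1) (a a' : ι) (hne : a' ≠ a)
    (α : K a) (α' : K a') :
    ∑ x : ∀ i, K i, (if x a = α ∧ x a' = α' then ∏ i, p i (x i) else 0) = p a α * p a' α' := by
  set c : ∀ i, K i → ℝ :=
    Function.update (Function.update (fun i (_ : K i) => (1 : ℝ)) a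
      (fun ξ => if ξ = α then 1 else 0)) a' (fun ξ => if ξ = α' then 1 else 0) with hc
  have hca : c a = fun ξ => if ξ = α then 1 else 0 := by
    rw [hc, Function.update_of_ne (Ne.symm hne), Function.update_self]
  have hca' : c a' = fun ξ => if ξ = α' then 1 else 0 := by
    rw [hc, Function.update_self]
  have hcother : ∀ i, i ≠ a → i ≠ a' → c i = fun _ => (1 : ℝ) := by
    intro i hia hia'
    rw [hc, Function.update_of_ne hia', Function.update_of_ne hia]
  have key : ∀ t : ι → ℝ, (∀ i, i ≠ a → i ≠ a' → t i = 1) → (∏ i, t i) = t a * t a' := by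
    intro t ht
    rw [← Finset.prod_subset (Finset.subset_univ ({a, a'} : Finset ι))
      (fun i _ hi => by
        simp only [Finset.mem_insert, Finset.mem_singleton, not_or] at hi
        exact ht i hi.1 hi.2)]
    rw [Finset.prod_pair (Ne.symm hne)]
  have hprod : ∀ x : ∀ i, K i,
      (∏ i, c i (x i)) = if x a = α ∧ x a' = α' then 1 else 0 := by
    intro x
    rw [key (fun i => c i (x i)) (fun i hia hia' => by show c i (x i) = 1; rw [hcother i hia hia']), hca, hca']
    by_cases h1 : x a = α <;> by_cases h2 : x a' = α' <;> simp [h1, h2]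
  have h2 : (∏ i, ∑ ξ, p i ξ * c i ξ) = p a α * p a' α' := by
    rw [key (fun i => ∑ ξ, p i ξ * c i ξ)
      (fun i hia hia' => by show (∑ ξ, p i ξ * c i ξ) = 1; rw [hcother i hia hia']; simp [hp i])]
    rw [hca, hca']
    simp [mul_ite, mul_one, mul_zero, Finset.sum_ite_eq']
  rw [← h2, ← sum_prod_mul p c]
  refine Finset.sum_congr rfl fun x _ => ?_
  rw [hprod x]
  by_cases hx : x a = α ∧ x a' = α' <;> simp [hx]

end Pi



lemma sum_ind₂' {ι : Type*} [Fintype ι] [DecidableEq ι] {K : ι → Type*} [∀ i, Fintype (K i)]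
    (p : ∀ i, K i → ℝ) (hp : ∀ i, ∑ ξ, p i ξ = 1) (a : ι) (α α' : K a)
    (h1 : ∑ x : ∀ i, K i, (if x a = α then ∏ i, p i (x i) else 0) = p a α) :
    ∑ x : ∀ i, K i, (if x a = α ∧ x a = α' then ∏ i, p i (x i) else 0)
      = if α' = α then p a α else 0 := by
  by_cases h : α' = α
  · subst h
    rw [if_pos rfl, ← h1]
    exact Finset.sum_congr rfl fun x _ => by by_cases hx : x a = α' <;> simp [hx]
  · rw [if_neg h]
    refine Finset.sum_eq_zero fun x _ => ?_
    rw [if_neg]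
    rintro ⟨u1, u2⟩
    exact h (u2 ▸ u1 ▸ rfl)

section Main
variable {N M : ℕ} (hN : 0 < N) (hM : 0 < M) {U : Fin N → Type} {V : Fin M → Type}
  [∀ a, Fintype (U a)] [∀ b, Fintype (V b)] (P : Box.PRState U V)

noncomputable def pA (a : Fin N) (α : U a) : ℝ := ∑ β, P.val a ⟨0, hM⟩ α β

noncomputable def pB (b : Fin M) (β : V b) : ℝ := ∑ α, P.val ⟨0, hN⟩ b α β

lemma pA_eq (a : Fin N) (b : Fin M) (α : U a) :
    ∑ β, P.val a b α β = pA hM P a α := P.nonsig_right a b _ α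

lemma pB_eq (a : Fin N) (b : Fin M) (β : V b) :
    ∑ α, P.val a b α β = pB hN P b β := P.nonsig_left a _ b β

lemma sum_pA (a : Fin N) : ∑ α, pA hM P a α = 1 := P.normalized a _

lemma sum_pB (b : Fin M) : ∑ β, pB hN P b β = 1 := by
  unfold pB; rw [Finset.sum_comm]; exact P.normalized _ b

lemma val_zero_of_pA {a : Fin N} {α : U a} (h : pA hM P a α = 0) (b : Fin M) (β : V b) :
    P.val a b α β = 0 := by
  have hs : ∑ β, P.val a b α β = 0 := by rw [pA_eq hM P a b α]; exact h
  exact (Finset.sum_eq_zero_iff_of_nonneg (fun β _ => P.nonneg a b α β)).mp hs β (mem_univ β)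

lemma val_zero_of_pB {b : Fin M} {β : V b} (h : pB hN P b β = 0) (a : Fin N) (α : U a) :
    P.val a b α β = 0 := by
  have hs : ∑ α, P.val a b α β = 0 := by rw [pB_eq hN P a b β]; exact h
  exact (Finset.sum_eq_zero_iff_of_nonneg (fun α _ => P.nonneg a b α β)).mp hs α (mem_univ α)

noncomputable def hh (a : Fin N) (b : Fin M) (α : U a) (β : V b) : ℝ :=
  P.val a b α β / (pA hM P a α * pB hN P b β) - 1

lemma keyE (a : Fin N) (b : Fin M) (α : U a) (β : V b) :
    pA hM P a α * pB hN P b β * hh hN hM P a b α β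
      = P.val a b α β - pA hM P a α * pB hN P b β := by
  unfold hh
  by_cases h1 : pA hM P a α = 0
  · simp [h1, val_zero_of_pA hM P h1]
  by_cases h2 : pB hN P b β = 0
  · simp [h2, val_zero_of_pB hN P h2]
  · field_simp

lemma keyK2 {a : Fin N} {α : U a} (h1 : pA hM P a α ≠ 0) (b : Fin M) :
    ∑ β, pB hN P b β * hh hN hM P a b α β = 0 := by
  have hterm : ∀ β, pB hN P b β * hh hN hM P a b α β
      = P.val a b α β / pA hM P a α - pB hN P b β := by
    intro β
    unfold hh
    by_cases h2 : pB hN P b β = 0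
    · simp [h2, val_zero_of_pB hN P h2]
    · field_simp
  simp only [hterm]
  rw [Finset.sum_sub_distrib, ← Finset.sum_div, pA_eq hM P a b α, sum_pB hN P b,
    div_self h1, sub_self]

lemma keyK1 {b : Fin M} {β : V b} (h2 : pB hN P b β ≠ 0) (a : Fin N) :
    ∑ α, pA hM P a α * hh hN hM P a b α β = 0 := by
  have hterm : ∀ α, pA hM P a α * hh hN hM P a b α β
      = P.val a b α β / pB hN P b β - pA hM P a α := by
    intro α
    unfold hh
    by_cases h1 : pA hM P a α = 0
    · simp [h1, val_zero_of_pA hM P h1]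
    · field_simp
  simp only [hterm]
  rw [Finset.sum_sub_distrib, ← Finset.sum_div, pB_eq hN P a b β, sum_pA hM P a,
    div_self h2, sub_self]

lemma keyK3 (a : Fin N) (b : Fin M) :
    ∑ α, ∑ β, pA hM P a α * pB hN P b β * hh hN hM P a b α β = 0 := by
  have : ∀ α : U a, ∀ β : V b, pA hM P a α * pB hN P b β * hh hN hM P a b α β
      = P.val a b α β - pA hM P a α * pB hN P b β := fun α β => keyE hN hM P a b α β
  simp only [this]
  simp only [Finset.sum_sub_distrib]
  rw [P.normalized a b]
  have : ∑ α, ∑ β, pA hM P a α * pB hN P b β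
      = (∑ α, pA hM P a α) * (∑ β, pB hN P b β) := by
    rw [Finset.sum_mul_sum]
  rw [this, sum_pA hM P a, sum_pB hN P b, one_mul, sub_self]

noncomputable def w (z : (∀ i, U i) × (∀ j, V j)) : ℝ :=
  (∏ i, pA hM P i (z.1 i)) * (∏ j, pB hN P j (z.2 j)) *
    (1 + ∑ a', ∑ b', hh hN hM P a' b' (z.1 a') (z.2 b'))

lemma sum_atom (a : Fin N) (α : U a) (b : Fin M) (β : V b) :
    ∑ z : (∀ i, U i) × (∀ j, V j),
      (if z.1 a = α ∧ z.2 b = β then w hN hM P z else 0) = P.val a b α β := by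
  rw [Fintype.sum_prod_type]
  set Φ : (∀ i, U i) → ℝ := fun x => if x a = α then ∏ i, pA hM P i (x i) else 0 with hΦ
  set Ψ : (∀ j, V j) → ℝ := fun y => if y b = β then ∏ j, pB hN P j (y j) else 0 with hΨ
  have hsummand : ∀ (x : ∀ i, U i) (y : ∀ j, V j),
      (if (x, y).1 a = α ∧ (x, y).2 b = β then w hN hM P (x, y) else 0)
      = Φ x * Ψ y
        + ∑ a', ∑ b', Φ x * Ψ y * hh hN hM P a' b' (x a') (y b') := by
    intro x y
    by_cases h1 : x a = α <;> by_cases h2 : y b = β <;>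
      simp [w, hΦ, hΨ, h1, h2, mul_add, mul_one, Finset.mul_sum, mul_assoc]
  simp only [hsummand]
  simp only [Finset.sum_add_distrib]
  have hA : (∑ x : ∀ i, U i, ∑ y : ∀ j, V j, Φ x * Ψ y) = pA hM P a α * pB hN P b β := by
    rw [← Finset.sum_mul_sum]
    rw [hΦ, hΨ]
    rw [sum_ind₁ (pA hM P) (sum_pA hM P) a α, sum_ind₁ (pB hN P) (sum_pB hN P) b β]
  -- the h-part
  have hswap : (∑ x : ∀ i, U i, ∑ y : ∀ j, V j, ∑ a', ∑ b',
        Φ x * Ψ y * hh hN hM P a' b' (x a') (y b'))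
      = ∑ a', ∑ b', ∑ x : ∀ i, U i, ∑ y : ∀ j, V j,
        Φ x * Ψ y * hh hN hM P a' b' (x a') (y b') := by
    calc (∑ x : ∀ i, U i, ∑ y : ∀ j, V j, ∑ a', ∑ b',
        Φ x * Ψ y * hh hN hM P a' b' (x a') (y b'))
        = ∑ x : ∀ i, U i, ∑ a', ∑ y : ∀ j, V j, ∑ b',
            Φ x * Ψ y * hh hN hM P a' b' (x a') (y b') :=
          Finset.sum_congr rfl fun x _ => Finset.sum_comm
      _ = ∑ a', ∑ x : ∀ i, U i, ∑ y : ∀ j, V j, ∑ b',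
            Φ x * Ψ y * hh hN hM P a' b' (x a') (y b') := Finset.sum_comm
      _ = ∑ a', ∑ x : ∀ i, U i, ∑ b', ∑ y : ∀ j, V j,
            Φ x * Ψ y * hh hN hM P a' b' (x a') (y b') :=
          Finset.sum_congr rfl fun a' _ => Finset.sum_congr rfl fun x _ => Finset.sum_comm
      _ = ∑ a', ∑ b', ∑ x : ∀ i, U i, ∑ y : ∀ j, V j,
            Φ x * Ψ y * hh hN hM P a' b' (x a') (y b') :=
          Finset.sum_congr rfl fun a' _ => Finset.sum_comm
  have hTgen : ∀ (a' : Fin N) (b' : Fin M),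
      (∑ x : ∀ i, U i, ∑ y : ∀ j, V j, Φ x * Ψ y * hh hN hM P a' b' (x a') (y b'))
      = ∑ u, ∑ v, (∑ x : ∀ i, U i, if x a = α ∧ x a' = u then ∏ i, pA hM P i (x i) else 0)
          * (∑ y : ∀ j, V j, if y b = β ∧ y b' = v then ∏ j, pB hN P j (y j) else 0)
          * hh hN hM P a' b' u v := by
    intro a' b'
    refine Eq.trans (double_fiber Φ Ψ (fun x => x a') (fun y => y b') (hh hN hM P a' b')) ?_
    refine Finset.sum_congr rfl fun u _ => Finset.sum_congr rfl fun v _ => ?_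
    congr 2
    · refine Finset.sum_congr rfl fun x _ => ?_
      rw [hΦ]
      by_cases hx : x a = α <;> by_cases hx' : x a' = u <;> simp [hx, hx']
    · refine Finset.sum_congr rfl fun y _ => ?_
      rw [hΨ]
      by_cases hy : y b = β <;> by_cases hy' : y b' = v <;> simp [hy, hy']
  have hTab : (∑ x : ∀ i, U i, ∑ y : ∀ j, V j, Φ x * Ψ y * hh hN hM P a b (x a) (y b))
      = P.val a b α β - pA hM P a α * pB hN P b β := by
    rw [hTgen a b]
    have e1 : ∀ u : U a, (∑ x : ∀ i, U i, if x a = α ∧ x a = u then ∏ i, pA hM P i (x i) else 0)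
        = if u = α then pA hM P a α else 0 :=
      fun u => sum_ind₂' (pA hM P) (sum_pA hM P) a α u (sum_ind₁ (pA hM P) (sum_pA hM P) a α)
    have e2 : ∀ v : V b, (∑ y : ∀ j, V j, if y b = β ∧ y b = v then ∏ j, pB hN P j (y j) else 0)
        = if v = β then pB hN P b β else 0 :=
      fun v => sum_ind₂' (pB hN P) (sum_pB hN P) b β v (sum_ind₁ (pB hN P) (sum_pB hN P) b β)
    simp only [e1, e2, ite_mul, zero_mul, mul_ite, mul_zero, Finset.sum_ite_eq',
      Finset.mem_univ, if_true]
    exact keyE hN hM P a b α β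
  have hT0 : ∀ (a' : Fin N) (b' : Fin M), a' ≠ a ∨ b' ≠ b →
      (∑ x : ∀ i, U i, ∑ y : ∀ j, V j, Φ x * Ψ y * hh hN hM P a' b' (x a') (y b')) = 0 := by
    intro a' b' hor
    rw [hTgen a' b']
    by_cases ha' : a' = a
    · subst ha'
      have hb' : b' ≠ b := hor.resolve_left (fun h => h rfl)
      have e1 : ∀ u : U a', (∑ x : ∀ i, U i, if x a' = α ∧ x a' = u then ∏ i, pA hM P i (x i) else 0)
          = if u = α then pA hM P a' α else 0 :=
        fun u => sum_ind₂' (pA hM P) (sum_pA hM P) a' α u (sum_ind₁ (pA hM P) (sum_pA hM P) a' α)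
      have e2 : ∀ v : V b', (∑ y : ∀ j, V j, if y b = β ∧ y b' = v then ∏ j, pB hN P j (y j) else 0)
          = pB hN P b β * pB hN P b' v :=
        fun v => sum_ind₂ (pB hN P) (sum_pB hN P) b b' hb' β v
      simp only [e1, e2]
      rw [Finset.sum_comm]
      simp only [ite_mul, zero_mul, Finset.sum_ite_eq', Finset.mem_univ, if_true]
      by_cases hpa : pA hM P a' α = 0
      · simp [hpa]
      · have e3 : ∀ v : V b', pA hM P a' α * (pB hN P b β * pB hN P b' v) * hh hN hM P a' b' α v
            = (pA hM P a' α * pB hN P b β) * (pB hN P b' v * hh hN hM P a' b' α v) :=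
          fun v => by ring
        simp only [e3, ← Finset.mul_sum]
        rw [keyK2 hN hM P hpa b', mul_zero]
    · by_cases hb' : b' = b
      · subst hb'
        have e1 : ∀ u : U a', (∑ x : ∀ i, U i, if x a = α ∧ x a' = u then ∏ i, pA hM P i (x i) else 0)
            = pA hM P a α * pA hM P a' u :=
          fun u => sum_ind₂ (pA hM P) (sum_pA hM P) a a' ha' α u
        have e2 : ∀ v : V b', (∑ y : ∀ j, V j, if y b' = β ∧ y b' = v then ∏ j, pB hN P j (y j) else 0)
            = if v = β then pB hN P b' β else 0 :=
          fun v => sum_ind₂' (pB hN P) (sum_pB hN P) b' β v (sum_ind₁ (pB hN P) (sum_pB hN P) b' β)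
        simp only [e1, e2]
        simp only [mul_ite, mul_zero, ite_mul, zero_mul, Finset.sum_ite_eq', Finset.mem_univ, if_true]
        by_cases hpb : pB hN P b' β = 0
        · simp [hpb]
        · have e3 : ∀ u : U a', pA hM P a α * pA hM P a' u * pB hN P b' β * hh hN hM P a' b' u β
              = (pA hM P a α * pB hN P b' β) * (pA hM P a' u * hh hN hM P a' b' u β) :=
            fun u => by ring
          simp only [e3, ← Finset.mul_sum]
          rw [keyK1 hN hM P hpb a', mul_zero]
      · have e1 : ∀ u : U a', (∑ x : ∀ i, U i, if x a = α ∧ x a' = u then ∏ i, pA hM P i (x i) else 0)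
            = pA hM P a α * pA hM P a' u :=
          fun u => sum_ind₂ (pA hM P) (sum_pA hM P) a a' ha' α u
        have e2 : ∀ v : V b', (∑ y : ∀ j, V j, if y b = β ∧ y b' = v then ∏ j, pB hN P j (y j) else 0)
            = pB hN P b β * pB hN P b' v :=
          fun v => sum_ind₂ (pB hN P) (sum_pB hN P) b b' hb' β v
        simp only [e1, e2]
        have e3 : ∀ (u : U a') (v : V b'),
            pA hM P a α * pA hM P a' u * (pB hN P b β * pB hN P b' v) * hh hN hM P a' b' u v
            = (pA hM P a α * pB hN P b β) * (pA hM P a' u * pB hN P b' v * hh hN hM P a' b' u v) :=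
          fun u v => by ring
        simp only [e3, ← Finset.mul_sum]
        rw [keyK3 hN hM P a' b', mul_zero]
  rw [hA, hswap]
  rw [Finset.sum_eq_single a
    (fun a' _ ha' => Finset.sum_eq_zero fun b' _ => hT0 a' b' (Or.inl ha'))
    (fun h => absurd (Finset.mem_univ a) h)]
  rw [Finset.sum_eq_single b
    (fun b' _ hb' => hT0 a b' (Or.inr hb'))
    (fun h => absurd (Finset.mem_univ b) h)]
  rw [hTab]
  ring

noncomputable def mu (S : Set ((∀ i, U i) × (∀ j, V j))) : ℝ :=
  ∑ z, if z ∈ S then w hN hM P z else 0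

lemma mu_iUnion (n : ℕ) (f : Fin n → Set ((∀ i, U i) × (∀ j, V j)))
    (hd : ∀ i j, i ≠ j → Disjoint (f i) (f j)) :
    mu hN hM P (⋃ i, f i) = ∑ i, mu hN hM P (f i) := by
  unfold mu
  rw [Finset.sum_comm]
  refine Finset.sum_congr rfl fun z _ => ?_
  by_cases hz : z ∈ ⋃ i, f i
  · obtain ⟨i₀, hi₀⟩ := Set.mem_iUnion.mp hz
    rw [if_pos hz, Finset.sum_eq_single i₀
      (fun j _ hj => by
        rw [if_neg]
        exact fun hzf => (Set.disjoint_left.mp (hd j i₀ hj) hzf hi₀).elim)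
      (fun h => absurd (Finset.mem_univ i₀) h), if_pos hi₀]
  · rw [if_neg hz]
    refine (Finset.sum_eq_zero fun j _ => ?_).symm
    rw [if_neg fun hzf => hz (Set.mem_iUnion.mpr ⟨j, hzf⟩)]

lemma mu_atom (a : Fin N) (α : U a) (b : Fin M) (β : V b) :
    mu hN hM P (Box.atom a α b β) = P.val a b α β := by
  unfold mu
  rw [← sum_atom hN hM P a α b β]
  refine Finset.sum_congr rfl fun z _ => ?_
  simp only [Box.atom, Set.mem_setOf_eq]

end Main


end PRProof

theorem statement4 {N M : ℕ} (hN : 0 < N) (hM : 0 < M)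
    (U : Fin N → Type) (V : Fin M → Type)
    [∀ a, Fintype (U a)] [∀ b, Fintype (V b)]
    (hU : ∀ a, 2 ≤ Fintype.card (U a)) (hV : ∀ b, 2 ≤ Fintype.card (V b))
    (P : Box.PRState U V) (n m : ℕ)
    (A : Fin n → Fin N) (al : ∀ i, U (A i)) (B : Fin n → Fin M) (be : ∀ i, V (B i))
    (C : Fin m → Fin N) (ga : ∀ j, U (C j)) (D : Fin m → Fin M) (de : ∀ j, V (D j))
    (hd₁ : ∀ i j, i ≠ j →
      Disjoint (Box.atom (A i) (al i) (B i) (be i)) (Box.atom (A j) (al j) (B j) (be j)))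
    (hne₁ : ∀ i j, i ≠ j →
      Box.atom (A i) (al i) (B i) (be i) ≠ Box.atom (A j) (al j) (B j) (be j))
    (hd₂ : ∀ i j, i ≠ j →
      Disjoint (Box.atom (C i) (ga i) (D i) (de i)) (Box.atom (C j) (ga j) (D j) (de j)))
    (hne₂ : ∀ i j, i ≠ j →
      Box.atom (C i) (ga i) (D i) (de i) ≠ Box.atom (C j) (ga j) (D j) (de j))
    (heq : ⋃ i, Box.atom (A i) (al i) (B i) (be i) =
           ⋃ j, Box.atom (C j) (ga j) (D j) (de j)) :
    ∑ i, P.val (A i) (B i) (al i) (be i) = ∑ j, P.val (C j) (D j) (ga j) (de j) := by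

  classical
  calc ∑ i, P.val (A i) (B i) (al i) (be i)
      = ∑ i, PRProof.mu hN hM P (Box.atom (A i) (al i) (B i) (be i)) :=
        Finset.sum_congr rfl fun i _ => (PRProof.mu_atom hN hM P (A i) (al i) (B i) (be i)).symm
    _ = PRProof.mu hN hM P (⋃ i, Box.atom (A i) (al i) (B i) (be i)) :=
        (PRProof.mu_iUnion hN hM P n _ hd₁).symm
    _ = PRProof.mu hN hM P (⋃ j, Box.atom (C j) (ga j) (D j) (de j)) := by rw [heq]
    _ = ∑ j, PRProof.mu hN hM P (Box.atom (C j) (ga j) (D j) (de j)) :=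
        PRProof.mu_iUnion hN hM P m _ hd₂
    _ = ∑ j, P.val (C j) (D j) (ga j) (de j) :=
        Finset.sum_congr rfl fun j _ => PRProof.mu_atom hN hM P (C j) (ga j) (D j) (de j)
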